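/- Let P be a probability distribution on a finite set of size n ≥ 2 and 0 < r < 1. Then there exists p ∈ [1/n, 1] with ‖v_n(p)‖_r = ‖P‖_r, and for this p: ‖v_n(p)‖_s ≤ ‖P‖_s for all s ∈ (r, 1), and ‖v_n(p)‖_s ≥ ‖P‖_s for all s ∈ (0, r) ∪ (1, ∞]. -/

import Mathlib

open Set Finset

lemma core_sign (Φ H G : ℝ → ℝ) (t r : ℝ) (ht : 0 < t)
    (hΦd : ∀ s, HasDerivAt Φ (H s * t ^ s) s)
    (hHd : ∀ s, HasDerivAt H (G s) s)
    (hG : Monotone G)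
    (hr0 : 0 < r) (hr1 : r < 1)
    (h0 : Φ 0 = 0) (hr : Φ r = 0) (h1 : Φ 1 = 0) :
    (∀ s, 0 ≤ s → s ≤ r → 0 ≤ Φ s) ∧ (∀ s, r ≤ s → s ≤ 1 → Φ s ≤ 0) ∧
      (∀ s, 1 ≤ s → 0 ≤ Φ s) := by
  have hΦc : Continuous Φ :=
    continuous_iff_continuousAt.mpr fun x => (hΦd x).continuousAt
  have hHc : Continuous H :=
    continuous_iff_continuousAt.mpr fun x => (hHd x).continuousAt
  have tpos : ∀ s : ℝ, 0 < t ^ s := fun s => Real.rpow_pos_of_pos ht s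
  -- Rolle on [0, r]
  obtain ⟨s1, hs1mem, hs1⟩ := exists_hasDerivAt_eq_zero hr0 hΦc.continuousOn
    (h0.trans hr.symm) (fun x _ => hΦd x)
  obtain ⟨s2, hs2mem, hs2⟩ := exists_hasDerivAt_eq_zero hr1 hΦc.continuousOn
    (hr.trans h1.symm) (fun x _ => hΦd x)
  have hHs1 : H s1 = 0 := by
    rcases mul_eq_zero.mp hs1 with h | h
    · exact h
    · exact absurd h (tpos s1).ne'
  have hHs2 : H s2 = 0 := by
    rcases mul_eq_zero.mp hs2 with h | h
    · exact h
    · exact absurd h (tpos s2).ne'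
  have hs12 : s1 < s2 := hs1mem.2.trans hs2mem.1
  -- Rolle on [s1, s2] for H
  obtain ⟨m, hmmem, hm⟩ := exists_hasDerivAt_eq_zero hs12 hHc.continuousOn
    (hHs1.trans hHs2.symm) (fun x _ => hHd x)
  -- H is antitone left of m, monotone right of m
  have hHanti : AntitoneOn H (Iic m) := by
    apply antitoneOn_of_hasDerivWithinAt_nonpos (convex_Iic m) hHc.continuousOn
      (fun x _ => (hHd x).hasDerivWithinAt)
    · intro x hx
      rw [interior_Iic] at hx
      calc G x ≤ G m := hG hx.le
        _ = 0 := hm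
  have hHmono : MonotoneOn H (Ici m) := by
    apply monotoneOn_of_hasDerivWithinAt_nonneg (convex_Ici m) hHc.continuousOn
      (fun x _ => (hHd x).hasDerivWithinAt)
    · intro x hx
      rw [interior_Ici] at hx
      calc (0:ℝ) = G m := hm.symm
        _ ≤ G x := hG hx.le
  -- sign facts about H
  have Hleft : ∀ s, s ≤ s1 → 0 ≤ H s := fun s hs => by
    have := hHanti (show s ∈ Iic m from hs.trans hmmem.1.le)
      (show s1 ∈ Iic m from hmmem.1.le) hs
    rwa [hHs1] at this
  have Hmid : ∀ s, s1 ≤ s → s ≤ s2 → H s ≤ 0 := by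
    intro s hs1' hs2'
    rcases le_total s m with h | h
    · have := hHanti (show s1 ∈ Iic m from hmmem.1.le) (show s ∈ Iic m from h) hs1'
      rwa [hHs1] at this
    · have := hHmono (show s ∈ Ici m from h) (show s2 ∈ Ici m from hmmem.2.le) hs2'
      rwa [hHs2] at this
  have Hright : ∀ s, s2 ≤ s → 0 ≤ H s := fun s hs => by
    have := hHmono (show s2 ∈ Ici m from hmmem.2.le)
      (show s ∈ Ici m from hmmem.2.le.trans hs) hs
    rwa [hHs2] at this
  -- monotonicity of Φ on the pieces
  have Φmono1 : MonotoneOn Φ (Iic s1) := by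
    apply monotoneOn_of_hasDerivWithinAt_nonneg (convex_Iic s1) hΦc.continuousOn
      (fun x _ => (hΦd x).hasDerivWithinAt)
    intro x hx
    rw [interior_Iic] at hx
    exact mul_nonneg (Hleft x hx.le) (tpos x).le
  have Φanti : AntitoneOn Φ (Icc s1 s2) := by
    apply antitoneOn_of_hasDerivWithinAt_nonpos (convex_Icc s1 s2) hΦc.continuousOn
      (fun x _ => (hΦd x).hasDerivWithinAt)
    intro x hx
    rw [interior_Icc] at hx
    exact mul_nonpos_of_nonpos_of_nonneg (Hmid x hx.1.le hx.2.le) (tpos x).le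
  have Φmono2 : MonotoneOn Φ (Ici s2) := by
    apply monotoneOn_of_hasDerivWithinAt_nonneg (convex_Ici s2) hΦc.continuousOn
      (fun x _ => (hΦd x).hasDerivWithinAt)
    intro x hx
    rw [interior_Ici] at hx
    exact mul_nonneg (Hright x hx.le) (tpos x).le
  have hrs : s1 ≤ r := hs1mem.2.le
  have hrs2 : r ≤ s2 := hs2mem.1.le
  refine ⟨?_, ?_, ?_⟩
  · intro s hs0 hsr
    rcases le_total s s1 with h | h
    · have := Φmono1 (show (0:ℝ) ∈ Iic s1 from hs1mem.1.le) (show s ∈ Iic s1 from h) hs0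
      rwa [h0] at this
    · have := Φanti (show s ∈ Icc s1 s2 from ⟨h, hsr.trans hrs2⟩)
        (show r ∈ Icc s1 s2 from ⟨hrs, hrs2⟩) hsr
      rwa [hr] at this
  · intro s hrs' hs1'
    rcases le_total s s2 with h | h
    · have := Φanti (show r ∈ Icc s1 s2 from ⟨hrs, hrs2⟩)
        (show s ∈ Icc s1 s2 from ⟨hrs.trans hrs', h⟩) hrs'
      rwa [hr] at this
    · have := Φmono2 (show s ∈ Ici s2 from h) (show (1:ℝ) ∈ Ici s2 from hs2mem.2.le) hs1'
      rwa [h1] at this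
  · intro s hs
    have := Φmono2 (show (1:ℝ) ∈ Ici s2 from hs2mem.2.le)
      (show s ∈ Ici s2 from hs2mem.2.le.trans hs) hs
    rwa [h1] at this


lemma sum_rpow_le_aux {ι : Type*} (T : Finset ι) (x : ι → ℝ) (hx : ∀ i ∈ T, 0 ≤ x i)
    {r : ℝ} (hr0 : 0 < r) (hr1 : r < 1) (hT : T.Nonempty) :
    ∑ i ∈ T, x i ^ r ≤ (T.card : ℝ) ^ (1 - r) * (∑ i ∈ T, x i) ^ r := by
  have hm : (0:ℝ) < T.card := by exact_mod_cast Finset.card_pos.mpr hT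
  have hp : (1:ℝ) ≤ 1 / r := by rw [le_div_iff₀ hr0]; linarith
  have key := Real.arith_mean_le_rpow_mean T (fun _ => ((T.card : ℝ))⁻¹)
    (fun i => x i ^ r) (fun i _ => by positivity)
    (by rw [Finset.sum_const, nsmul_eq_mul]; field_simp)
    (fun i hi => Real.rpow_nonneg (hx i hi) r) hp
  rw [one_div_one_div] at key
  have hz : ∀ i ∈ T, ((T.card:ℝ))⁻¹ * (x i ^ r) ^ (1/r) = ((T.card:ℝ))⁻¹ * x i := by
    intro i hi
    rw [← Real.rpow_mul (hx i hi), mul_one_div_cancel hr0.ne', Real.rpow_one]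
  rw [Finset.sum_congr rfl hz] at key
  have h1 : ((T.card:ℝ))⁻¹ * ∑ i ∈ T, x i ^ r ≤ (((T.card:ℝ))⁻¹ * ∑ i ∈ T, x i) ^ r := by
    calc ((T.card:ℝ))⁻¹ * ∑ i ∈ T, x i ^ r = ∑ i ∈ T, ((T.card:ℝ))⁻¹ * x i ^ r := by
          rw [Finset.mul_sum]
      _ ≤ (∑ i ∈ T, ((T.card:ℝ))⁻¹ * x i) ^ r := key
      _ = (((T.card:ℝ))⁻¹ * ∑ i ∈ T, x i) ^ r := by rw [Finset.mul_sum]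
  have h2 : (((T.card:ℝ))⁻¹ * ∑ i ∈ T, x i) ^ r
      = ((T.card:ℝ))⁻¹ ^ r * (∑ i ∈ T, x i) ^ r :=
    Real.mul_rpow (by positivity) (Finset.sum_nonneg hx)
  have h3 : ((T.card:ℝ)) ^ (1-r) = (T.card:ℝ) * ((T.card:ℝ))⁻¹ ^ r := by
    rw [Real.inv_rpow hm.le, Real.rpow_sub hm, Real.rpow_one, div_eq_mul_inv]
  calc ∑ i ∈ T, x i ^ r = (T.card:ℝ) * (((T.card:ℝ))⁻¹ * ∑ i ∈ T, x i ^ r) := by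
        field_simp
    _ ≤ (T.card:ℝ) * ((((T.card:ℝ))⁻¹ * ∑ i ∈ T, x i) ^ r) :=
        mul_le_mul_of_nonneg_left h1 hm.le
    _ = (T.card : ℝ) ^ (1 - r) * (∑ i ∈ T, x i) ^ r := by rw [h2, h3]; ring

theorem stmt_13 (n : ℕ) (hn : 2 ≤ n) (P : Fin n → ℝ) (hP : ∀ i, 0 < P i)
    (hsum : ∑ i, P i = 1) (r : ℝ) (hr0 : 0 < r) (hr1 : r < 1) :
    ∃ p ∈ Set.Icc (1 / (n : ℝ)) 1,
      (p ^ r + ((n : ℝ) - 1) ^ (1 - r) * (1 - p) ^ r) ^ (1 / r)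
          = (∑ i, P i ^ r) ^ (1 / r) ∧
      (∀ s : ℝ, r < s → s < 1 →
        (p ^ s + ((n : ℝ) - 1) ^ (1 - s) * (1 - p) ^ s) ^ (1 / s)
          ≤ (∑ i, P i ^ s) ^ (1 / s)) ∧
      (∀ s : ℝ, (0 < s ∧ s < r) ∨ 1 < s →
        (∑ i, P i ^ s) ^ (1 / s)
          ≤ (p ^ s + ((n : ℝ) - 1) ^ (1 - s) * (1 - p) ^ s) ^ (1 / s)) ∧
      (∀ i, P i ≤ p) := by
  have hn0 : (0:ℝ) < n := by positivity
  haveI : Nonempty (Fin n) := ⟨⟨0, by omega⟩⟩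
  have hc1 : (1:ℝ) ≤ (n:ℝ) - 1 := by
    have : (2:ℝ) ≤ n := by exact_mod_cast hn
    linarith
  have hc0 : (0:ℝ) < (n:ℝ) - 1 := by linarith
  -- each P i < 1
  have hP1 : ∀ i, P i < 1 := by
    intro i
    have : Nontrivial (Fin n) := Fin.nontrivial_iff_two_le.mpr hn
    obtain ⟨j, hj⟩ := exists_ne i
    have : P i < ∑ k, P k := by
      apply Finset.single_lt_sum hj (Finset.mem_univ i) (Finset.mem_univ j) (hP j)
      exact fun k _ _ => (hP k).le
    rwa [hsum] at this
  -- Σ P^r > 1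
  have hgt1 : 1 < ∑ i, P i ^ r := by
    have : ∑ i, P i < ∑ i, P i ^ r := by
      apply Finset.sum_lt_sum_of_nonempty Finset.univ_nonempty
      intro i _
      have := Real.rpow_lt_rpow_of_exponent_gt (hP i) (hP1 i) hr1
      rwa [Real.rpow_one] at this
    rwa [hsum] at this
  -- max element
  obtain ⟨i0, -, hi0⟩ := Finset.exists_max_image Finset.univ P Finset.univ_nonempty
  have hi0' : ∀ i, P i ≤ P i0 := fun i => hi0 i (Finset.mem_univ i)
  set M := P i0 with hM
  have hM1 : M < 1 := hP1 i0
  have hMpos : 0 < M := hP i0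
  have hMn : 1 / (n:ℝ) ≤ M := by
    rw [div_le_iff₀ hn0]
    have : (1:ℝ) ≤ n * M := by
      calc (1:ℝ) = ∑ i, P i := hsum.symm
        _ ≤ ∑ _i : Fin n, M := Finset.sum_le_sum fun i _ => hi0' i
        _ = n * M := by rw [Finset.sum_const, Finset.card_univ, Fintype.card_fin,
            nsmul_eq_mul]
    linarith
  -- erase sum
  have hcard : ((Finset.univ.erase i0).card : ℝ) = (n:ℝ) - 1 := by
    rw [Finset.card_erase_of_mem (Finset.mem_univ i0), Finset.card_univ, Fintype.card_fin]
    have : 1 ≤ n := by omega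
    push_cast [Nat.cast_sub this]
    ring
  have hsumT : ∑ i ∈ Finset.univ.erase i0, P i = 1 - M := by
    have := Finset.add_sum_erase Finset.univ P (Finset.mem_univ i0)
    rw [hsum] at this
    linarith
  have hTne : (Finset.univ.erase i0).Nonempty := by
    rw [← Finset.card_pos]
    have : (Finset.univ.erase i0).card = n - 1 := by
      rw [Finset.card_erase_of_mem (Finset.mem_univ i0), Finset.card_univ, Fintype.card_fin]
    omega
  have key2 : ∑ i, P i ^ r ≤ M ^ r + ((n:ℝ) - 1) ^ (1 - r) * (1 - M) ^ r := by
    have h := sum_rpow_le_aux (Finset.univ.erase i0) P (fun i _ => (hP i).le) hr0 hr1 hTne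
    rw [hcard, hsumT] at h
    have hsplit : ∑ i, P i ^ r = M ^ r + ∑ i ∈ Finset.univ.erase i0, P i ^ r := by
      rw [hM]
      exact (Finset.add_sum_erase Finset.univ (fun i => P i ^ r) (Finset.mem_univ i0)).symm
    rw [hsplit]
    linarith
  -- IVT
  set f : ℝ → ℝ := fun t => t ^ r + ((n:ℝ) - 1) ^ (1 - r) * (1 - t) ^ r with hf
  have hfc : Continuous f := by
    apply Continuous.add (Real.continuous_rpow_const hr0.le)
    exact Continuous.mul continuous_const
      ((Real.continuous_rpow_const hr0.le).comp (continuous_const.sub continuous_id))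
  have hf1 : f 1 = 1 := by
    simp only [hf, sub_self, Real.one_rpow, Real.zero_rpow hr0.ne', mul_zero, add_zero]
  have hfM : ∑ i, P i ^ r ≤ f M := key2
  obtain ⟨p, hpmem, hfp⟩ : ∃ p ∈ Icc M 1, f p = ∑ i, P i ^ r := by
    apply intermediate_value_Icc' hM1.le hfc.continuousOn
    rw [hf1]
    exact ⟨hgt1.le, hfM⟩
  obtain ⟨hpM, hp1⟩ := hpmem
  have hppos : 0 < p := lt_of_lt_of_le hMpos hpM
  have hPp : ∀ i, P i ≤ p := fun i => (hi0' i).trans hpM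
  have hpn : 1 / (n:ℝ) ≤ p := hMn.trans hpM
  have hplt1 : p < 1 := by
    rcases lt_or_eq_of_le hp1 with h | h
    · exact h
    · exfalso; rw [h] at hfp; rw [hf1] at hfp; linarith
  have goal1 : (p ^ r + ((n : ℝ) - 1) ^ (1 - r) * (1 - p) ^ r) ^ (1 / r)
      = (∑ i, P i ^ r) ^ (1 / r) := congrArg (fun x => x ^ (1 / r)) hfp
  have hsum_nonneg : ∀ s : ℝ, (0:ℝ) ≤ ∑ i, P i ^ s := fun s =>
    Finset.sum_nonneg fun i _ => Real.rpow_nonneg (hP i).le s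
  have hv_nonneg : ∀ s : ℝ, (0:ℝ) ≤ p ^ s + ((n : ℝ) - 1) ^ (1 - s) * (1 - p) ^ s := fun s =>
    add_nonneg (Real.rpow_nonneg hppos.le s)
      (mul_nonneg (Real.rpow_nonneg hc0.le _) (Real.rpow_nonneg (by linarith) s))
  -- two cases: p = 1/n (uniform) or p > 1/n (main case)
  rcases eq_or_lt_of_le hpn with hcase | hcase
  · -- uniform case
    have hPi : ∀ i, P i = 1 / (n:ℝ) := by
      have h0 : ∀ i, 0 ≤ p - P i := fun i => sub_nonneg.mpr (hPp i)
      have hsump : ∑ i, (p - P i) = 0 := by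
        rw [Finset.sum_sub_distrib, hsum, Finset.sum_const, Finset.card_univ,
          Fintype.card_fin, nsmul_eq_mul, ← hcase]
        field_simp
        ring
      have hall := (Finset.sum_eq_zero_iff_of_nonneg (fun i _ => h0 i)).mp hsump
      intro i
      have := hall i (Finset.mem_univ i)
      have : P i = p := by linarith
      rw [this, ← hcase]
    have huni : ∀ s : ℝ, p ^ s + ((n : ℝ) - 1) ^ (1 - s) * (1 - p) ^ s = ∑ i, P i ^ s := by
      intro s
      have hrhs : ∑ i, P i ^ s = (n:ℝ) * (1/(n:ℝ)) ^ s := by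
        calc ∑ i, P i ^ s = ∑ _i : Fin n, (1/(n:ℝ)) ^ s :=
              Finset.sum_congr rfl fun i _ => by rw [hPi i]
          _ = (n:ℝ) * (1/(n:ℝ)) ^ s := by
              rw [Finset.sum_const, Finset.card_univ, Fintype.card_fin, nsmul_eq_mul]
      rw [← hcase, hrhs]
      have h1p : 1 - 1/(n:ℝ) = ((n:ℝ) - 1) * (1/(n:ℝ)) := by field_simp
      rw [h1p, Real.mul_rpow hc0.le (by positivity), ← mul_assoc, ← Real.rpow_add hc0]
      norm_num
      ring
    refine ⟨p, ⟨hpn, hp1⟩, goal1, ?_, ?_, hPp⟩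
    · intro s _ _; rw [huni s]
    · intro s _; rw [huni s]
  · -- main case : 1/n < p
    set q : ℝ := (1 - p) / ((n:ℝ) - 1) with hqdef
    set t : ℝ := q / p with htdef
    set b : Fin n → ℝ := fun i => P i / p with hbdef
    have hq0 : 0 < q := div_pos (by linarith) hc0
    have ht0 : 0 < t := div_pos hq0 hppos
    have hnp : 1 < p * (n:ℝ) := (div_lt_iff₀ hn0).mp hcase
    have hqp : q < p := by
      rw [hqdef, div_lt_iff₀ hc0]; nlinarith
    have ht1 : t < 1 := (div_lt_one hppos).mpr hqp
    have hb0 : ∀ i, 0 < b i := fun i => div_pos (hP i) hppos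
    have hb1 : ∀ i, b i ≤ 1 := fun i => (div_le_one hppos).mpr (hPp i)
    have hcq : ((n:ℝ) - 1) * q = 1 - p := by rw [hqdef]; field_simp
    have htp : t * p = q := by rw [htdef]; field_simp
    have hbp : ∀ i, p * b i = P i := fun i => by rw [hbdef]; field_simp
    have tpos : ∀ s : ℝ, 0 < t ^ s := fun s => Real.rpow_pos_of_pos ht0 s
    have ppos : ∀ s : ℝ, 0 < p ^ s := fun s => Real.rpow_pos_of_pos hppos s
    -- identities
    have idv : ∀ s : ℝ, p ^ s + ((n:ℝ) - 1) ^ (1 - s) * (1 - p) ^ s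
        = p ^ s * (1 + ((n:ℝ) - 1) * t ^ s) := by
      intro s
      have h1 : (1 - p) ^ s = ((n:ℝ) - 1) ^ s * (t ^ s * p ^ s) := by
        rw [← Real.mul_rpow ht0.le hppos.le, htp, ← Real.mul_rpow hc0.le hq0.le, hcq]
      have h2 : ((n:ℝ) - 1) ^ (1 - s) * ((n:ℝ) - 1) ^ s = (n:ℝ) - 1 := by
        rw [← Real.rpow_add hc0]; norm_num
      rw [h1, show ((n:ℝ)-1) ^ (1-s) * (((n:ℝ)-1) ^ s * (t ^ s * p ^ s))
        = (((n:ℝ)-1) ^ (1-s) * ((n:ℝ)-1) ^ s) * (t ^ s * p ^ s) by ring, h2]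
      ring
    have idP : ∀ s : ℝ, ∑ i, P i ^ s = p ^ s * ∑ i, b i ^ s := by
      intro s
      rw [Finset.mul_sum]
      refine Finset.sum_congr rfl fun i _ => ?_
      rw [← hbp i, Real.mul_rpow hppos.le (hb0 i).le]
    set Φ : ℝ → ℝ := fun s => 1 + ((n:ℝ) - 1) * t ^ s - ∑ i, b i ^ s with hΦdef
    have hdiff : ∀ s : ℝ, p ^ s + ((n:ℝ) - 1) ^ (1 - s) * (1 - p) ^ s - ∑ i, P i ^ s
        = p ^ s * Φ s := by
      intro s
      rw [idv s, idP s, hΦdef]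
      ring
    have Φ0 : Φ 0 = 0 := by
      show 1 + ((n:ℝ) - 1) * t ^ (0:ℝ) - ∑ i, b i ^ (0:ℝ) = 0
      simp only [Real.rpow_zero, Finset.sum_const, Finset.card_univ, Fintype.card_fin,
        nsmul_eq_mul, mul_one]
      ring
    have Φr : Φ r = 0 := by
      have hfp' : p ^ r + ((n:ℝ) - 1) ^ (1 - r) * (1 - p) ^ r = ∑ i, P i ^ r := hfp
      have h := hdiff r
      have hz : p ^ r * Φ r = 0 := by rw [← h, hfp']; ring
      rcases mul_eq_zero.mp hz with h' | h'
      · exact absurd h' (ppos r).ne'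
      · exact h'
    have Φ1 : Φ 1 = 0 := by
      have hsb : ∑ i, b i = 1 / p := by
        simp only [hbdef]
        rw [← Finset.sum_div, hsum]
      show 1 + ((n:ℝ) - 1) * t ^ (1:ℝ) - ∑ i, b i ^ (1:ℝ) = 0
      simp only [Real.rpow_one]
      rw [hsb, htdef, hqdef]
      field_simp
      ring
    -- derivative setup
    set H : ℝ → ℝ := fun s => ((n:ℝ) - 1) * Real.log t
      - ∑ i, Real.log (b i) * (b i / t) ^ s with hHdef
    set G : ℝ → ℝ := fun s =>
      - ∑ i, Real.log (b i) * ((b i / t) ^ s * Real.log (b i / t)) with hGdef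
    have hbt0 : ∀ i, 0 < b i / t := fun i => div_pos (hb0 i) ht0
    have hΦd : ∀ s, HasDerivAt Φ (H s * t ^ s) s := by
      intro s
      have d1 : HasDerivAt (fun s : ℝ => t ^ s) (t ^ s * Real.log t) s :=
        (Real.hasStrictDerivAt_const_rpow ht0 s).hasDerivAt
      have dsum : HasDerivAt (fun s : ℝ => ∑ i, b i ^ s)
          (∑ i, b i ^ s * Real.log (b i)) s :=
        HasDerivAt.fun_sum fun i _ => (Real.hasStrictDerivAt_const_rpow (hb0 i) s).hasDerivAt
      have dd := ((d1.const_mul ((n:ℝ) - 1)).const_add 1).sub dsum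
      refine dd.congr_deriv ?_
      symm
      rw [hHdef]
      simp only []
      rw [sub_mul, Finset.sum_mul]
      congr 1
      · ring
      · refine Finset.sum_congr rfl fun i _ => ?_
        rw [Real.div_rpow (hb0 i).le ht0.le, mul_assoc, div_mul_cancel₀ _ (tpos s).ne']
        ring
    have hHd : ∀ s, HasDerivAt H (G s) s := by
      intro s
      have dsum : HasDerivAt (fun s : ℝ => ∑ i, Real.log (b i) * (b i / t) ^ s)
          (∑ i, Real.log (b i) * ((b i / t) ^ s * Real.log (b i / t))) s :=
        HasDerivAt.fun_sum fun i _ =>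
          ((Real.hasStrictDerivAt_const_rpow (hbt0 i) s).hasDerivAt).const_mul _
      exact dsum.const_sub _
    have hGd : ∀ s, HasDerivAt G
        (- ∑ i, Real.log (b i)
          * (((b i / t) ^ s * Real.log (b i / t)) * Real.log (b i / t))) s := by
      intro s
      have dsum : HasDerivAt
          (fun s : ℝ => ∑ i, Real.log (b i) * ((b i / t) ^ s * Real.log (b i / t)))
          (∑ i, Real.log (b i)
            * (((b i / t) ^ s * Real.log (b i / t)) * Real.log (b i / t))) s :=
        HasDerivAt.fun_sum fun i _ =>
          (((Real.hasStrictDerivAt_const_rpow (hbt0 i) s).hasDerivAt).mul_const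
            (Real.log (b i / t))).const_mul _
      exact dsum.neg
    have hGmono : Monotone G := by
      apply monotone_of_hasDerivAt_nonneg hGd
      rw [Pi.le_def]
      intro s
      simp only [Pi.zero_apply]
      rw [neg_nonneg]
      apply Finset.sum_nonpos
      intro i _
      have hlog : Real.log (b i) ≤ 0 := Real.log_nonpos (hb0 i).le (hb1 i)
      have hX : (0:ℝ) ≤ (b i / t) ^ s := (Real.rpow_pos_of_pos (hbt0 i) s).le
      have : Real.log (b i)
          * (((b i / t) ^ s * Real.log (b i / t)) * Real.log (b i / t))
          = Real.log (b i) * ((b i / t) ^ s * (Real.log (b i / t) * Real.log (b i / t))) := by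
        ring
      rw [this]
      exact mul_nonpos_of_nonpos_of_nonneg hlog
        (mul_nonneg hX (mul_self_nonneg _))
    obtain ⟨reg1, reg2, reg3⟩ :=
      core_sign Φ H G t r ht0 hΦd hHd hGmono hr0 hr1 Φ0 Φr Φ1
    refine ⟨p, ⟨hpn, hp1⟩, goal1, ?_, ?_, hPp⟩
    · intro s hs1 hs2
      have hΦ := reg2 s hs1.le hs2.le
      have hD := hdiff s
      have hle : p ^ s + ((n:ℝ) - 1) ^ (1 - s) * (1 - p) ^ s ≤ ∑ i, P i ^ s := by
        have hps : p ^ s * Φ s ≤ 0 := mul_nonpos_of_nonneg_of_nonpos (ppos s).le hΦ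
        linarith [hdiff s]
      exact Real.rpow_le_rpow (hv_nonneg s) hle
        (one_div_nonneg.mpr (lt_trans hr0 hs1).le)
    · intro s hs
      have hΦ : 0 ≤ Φ s := by
        rcases hs with ⟨hs0, hsr⟩ | hs1'
        · exact reg1 s hs0.le hsr.le
        · exact reg3 s hs1'.le
      have hs0 : 0 < s := by
        rcases hs with ⟨hs0, _⟩ | hs1'
        · exact hs0
        · linarith
      have hD := hdiff s
      have hle : ∑ i, P i ^ s ≤ p ^ s + ((n:ℝ) - 1) ^ (1 - s) * (1 - p) ^ s := by
        have hps : 0 ≤ p ^ s * Φ s := mul_nonneg (ppos s).le hΦ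
        linarith [hdiff s]
      exact Real.rpow_le_rpow (hsum_nonneg s) hle (one_div_nonneg.mpr hs0.le)
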